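/- arXiv:2208.04463 — 3 statements merged into one kernel-verified Lean document; each statement's English description precedes it below -/
import Mathlib

section
/- Let R = R₀ ⊕ R₁ be a Z₂-graded commutative ring. The map φ : Z₂Spec R → Spec R₀ given by φ(P) = P ∩ R₀ is a homeomorphism between the homogeneous spectrum of R and the prime spectrum of R₀, both equipped with their Zariski topologies. -/
/-- A `ℤ/2ℤ`-grading on a commutative ring `R`: additive subgroups `R0`, `R1` with
`R = R0 ⊕ R1` (internal direct sum) and `Rᵢ · Rⱼ ⊆ R_{i+j}`. -/
structure Z2Grading (R : Type*) [CommRing R] where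
  R0 : AddSubgroup R
  R1 : AddSubgroup R
  one_mem : (1 : R) ∈ R0
  mul_mem_00 : ∀ {a b : R}, a ∈ R0 → b ∈ R0 → a * b ∈ R0
  mul_mem_01 : ∀ {a b : R}, a ∈ R0 → b ∈ R1 → a * b ∈ R1
  mul_mem_11 : ∀ {a b : R}, a ∈ R1 → b ∈ R1 → a * b ∈ R0
  sup_eq_top : R0 ⊔ R1 = ⊤
  inf_eq_bot : R0 ⊓ R1 = ⊥

/-- The sum `S + T` of two subsets of `R`. -/
def setSum {R : Type*} [CommRing R] (S T : Set R) : Set R :=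
  {z : R | ∃ a ∈ S, ∃ b ∈ T, z = a + b}

/-- The additive subgroup of `R` generated by the pairwise products of `S` and `T`
(i.e. the product `S·T` of an ideal/submodule pair). -/
def mulSet {R : Type*} [CommRing R] (S T : Set R) : AddSubgroup R :=
  AddSubgroup.closure {x : R | ∃ a ∈ S, ∃ b ∈ T, x = a * b}

namespace Z2Grading

variable {R : Type*} [CommRing R] (G : Z2Grading R)

/-- The set of homogeneous elements of `R`, namely `R₀ ∪ R₁`. -/
def homogeneous : Set R := ↑G.R0 ∪ ↑G.R1

/-- `R₁²`, the ideal of `R₀` generated by the products of two elements of `R₁`. -/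
def sq : AddSubgroup R := mulSet (↑G.R1) (↑G.R1)

/-- `R₁³ = R₁² · R₁`, an `R₀`-submodule of `R₁`. -/
def cube : AddSubgroup R := mulSet (↑G.sq) (↑G.R1)

/-- `I` is an ideal of the subring `R₀` (viewed inside `R`). -/
def IsIdeal0 (I : AddSubgroup R) : Prop :=
  (I : Set R) ⊆ ↑G.R0 ∧ ∀ a ∈ G.R0, ∀ x ∈ I, a * x ∈ I

/-- `N` is an `R₀`-submodule of `R₁` (viewed inside `R`). -/
def IsSubmodule1 (N : AddSubgroup R) : Prop :=
  (N : Set R) ⊆ ↑G.R1 ∧ ∀ a ∈ G.R0, ∀ x ∈ N, a * x ∈ N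

/-- The residual `(N :_{R₀} R₁) = {a ∈ R₀ : a·R₁ ⊆ N}`. -/
def residual (N : AddSubgroup R) : AddSubgroup R where
  carrier := {a : R | a ∈ G.R0 ∧ ∀ r ∈ G.R1, a * r ∈ N}
  zero_mem' := ⟨G.R0.zero_mem, fun r _ => by simpa using N.zero_mem⟩
  add_mem' := by
    rintro a b ⟨ha0, ha⟩ ⟨hb0, hb⟩
    exact ⟨G.R0.add_mem ha0 hb0, fun r hr => by
      rw [add_mul]; exact N.add_mem (ha r hr) (hb r hr)⟩
  neg_mem' := by
    rintro a ⟨ha0, ha⟩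
    exact ⟨G.R0.neg_mem ha0, fun r hr => by
      rw [neg_mul]; exact N.neg_mem (ha r hr)⟩

/-- `J` is a `ℤ₂`-graded ideal of `R`: the homogeneous components of each of its
elements again belong to `J`, i.e. `J = (J ∩ R₀) ⊕ (J ∩ R₁)`. -/
def IsGradedIdeal (J : Ideal R) : Prop :=
  ∀ x ∈ J, ∃ a b : R, a ∈ G.R0 ∧ b ∈ G.R1 ∧ a ∈ J ∧ b ∈ J ∧ x = a + b

/-- `J` is a `ℤ₂`-graded prime ideal of `R`. -/
def IsGradedPrime (J : Ideal R) : Prop :=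
  G.IsGradedIdeal J ∧ J ≠ ⊤ ∧
    ∀ r ∈ G.homogeneous, ∀ s ∈ G.homogeneous, r * s ∈ J → r ∈ J ∨ s ∈ J

/-- `J` is a `ℤ₂`-graded maximal ideal of `R`. -/
def IsGradedMaximal (J : Ideal R) : Prop :=
  G.IsGradedIdeal J ∧ J ≠ ⊤ ∧
    ∀ J' : Ideal R, G.IsGradedIdeal J' → J ≤ J' → J' = J ∨ J' = ⊤

/-- `p` is a prime ideal of the subring `R₀`. -/
def IsPrime0 (p : AddSubgroup R) : Prop :=
  G.IsIdeal0 p ∧ (p : Set R) ≠ ↑G.R0 ∧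
    ∀ a ∈ G.R0, ∀ b ∈ G.R0, a * b ∈ p → a ∈ p ∨ b ∈ p

/-- `p` is a maximal ideal of the subring `R₀`. -/
def IsMaximal0 (p : AddSubgroup R) : Prop :=
  G.IsIdeal0 p ∧ (p : Set R) ≠ ↑G.R0 ∧
    ∀ I : AddSubgroup R, G.IsIdeal0 I → p ≤ I → (I : Set R) = ↑p ∨ (I : Set R) = ↑G.R0

/-- `N` is a prime `R₀`-submodule of `R₁`. -/
def IsPrimeSubmodule1 (N : AddSubgroup R) : Prop :=
  G.IsSubmodule1 N ∧ (N : Set R) ≠ ↑G.R1 ∧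
    ∀ a ∈ G.R0, ∀ m ∈ G.R1, a * m ∈ N → a ∈ G.residual N ∨ m ∈ N

/-- `N` is a maximal (proper) `R₀`-submodule of `R₁`. -/
def IsMaximalSubmodule1 (N : AddSubgroup R) : Prop :=
  G.IsSubmodule1 N ∧ (N : Set R) ≠ ↑G.R1 ∧
    ∀ N' : AddSubgroup R, G.IsSubmodule1 N' → N ≤ N' →
      (N' : Set R) = ↑N ∨ (N' : Set R) = ↑G.R1

/-- `R` is a `ℤ₂`-graded integral domain. -/
def IsGradedDomain : Prop :=
  (1 : R) ≠ 0 ∧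
    ∀ r ∈ G.homogeneous, ∀ s ∈ G.homogeneous, r * s = 0 → r = 0 ∨ s = 0

/-- `R` is a `ℤ₂`-graded field. -/
def IsGradedField : Prop :=
  (1 : R) ≠ 0 ∧ ∀ r ∈ G.homogeneous, r ≠ 0 → IsUnit r

/-- `R₀` as a subring of `R`. -/
def toSubring : Subring R where
  carrier := ↑G.R0
  one_mem' := G.one_mem
  mul_mem' := fun ha hb => G.mul_mem_00 ha hb
  zero_mem' := G.R0.zero_mem
  add_mem' := fun ha hb => G.R0.add_mem ha hb
  neg_mem' := fun ha => G.R0.neg_mem ha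

/-- The Zariski topology on the homogeneous spectrum `Z₂Spec R`: closed sets are the
`V(I) = {P : I ⊆ P}` for `ℤ₂`-graded ideals `I`. -/
def gradedZariski : TopologicalSpace {Q : Ideal R // G.IsGradedPrime Q} :=
  TopologicalSpace.generateFrom
    {U : Set {Q : Ideal R // G.IsGradedPrime Q} |
      ∃ I : Ideal R, G.IsGradedIdeal I ∧ U = {P | ¬ I ≤ P.1}}

end Z2Grading

namespace Z2Grading

variable {R : Type*} [CommRing R] (G : Z2Grading R)

lemma exists_decomp (x : R) : ∃ a ∈ G.R0, ∃ b ∈ G.R1, x = a + b := by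
  have hx : x ∈ G.R0 ⊔ G.R1 := by rw [G.sup_eq_top]; trivial
  obtain ⟨a, ha, b, hb, h⟩ := AddSubgroup.mem_sup.mp hx
  exact ⟨a, ha, b, hb, h.symm⟩

lemma eq_zero_of_mem_both {x : R} (h0 : x ∈ G.R0) (h1 : x ∈ G.R1) : x = 0 := by
  have : x ∈ G.R0 ⊓ G.R1 := ⟨h0, h1⟩
  rwa [G.inf_eq_bot, AddSubgroup.mem_bot] at this

lemma decomp_unique {a b a' b' : R} (ha : a ∈ G.R0) (hb : b ∈ G.R1)
    (ha' : a' ∈ G.R0) (hb' : b' ∈ G.R1) (h : a + b = a' + b') : a = a' ∧ b = b' := by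
  have key : a - a' = 0 := by
    apply G.eq_zero_of_mem_both (G.R0.sub_mem ha ha')
    have : a - a' = b' - b := by linear_combination h
    rw [this]; exact G.R1.sub_mem hb' hb
  have h1 : a = a' := by linear_combination key
  exact ⟨h1, by linear_combination h - key⟩

/-- `x` is an element of `R₀` lying in the ideal `p` of `R₀`. -/
def mem0 (p : Ideal G.toSubring) (x : R) : Prop :=
  ∃ h : x ∈ G.toSubring, (⟨x, h⟩ : G.toSubring) ∈ p

lemma mem0_congr {p : Ideal G.toSubring} {x y : R} (h : x = y) :
    G.mem0 p x ↔ G.mem0 p y := by rw [h]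

lemma mem0_R0 {p : Ideal G.toSubring} {x : R} (h : G.mem0 p x) : x ∈ G.R0 := h.1

lemma mem0_zero (p : Ideal G.toSubring) : G.mem0 p 0 :=
  ⟨G.toSubring.zero_mem, p.zero_mem⟩

lemma mem0_add {p : Ideal G.toSubring} {x y : R} (hx : G.mem0 p x) (hy : G.mem0 p y) :
    G.mem0 p (x + y) := by
  obtain ⟨h1, h2⟩ := hx; obtain ⟨h3, h4⟩ := hy
  exact ⟨G.toSubring.add_mem h1 h3, p.add_mem h2 h4⟩

lemma mem0_mul {p : Ideal G.toSubring} {x : R} (a : R) (ha : a ∈ G.R0) (hx : G.mem0 p x) :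
    G.mem0 p (a * x) := by
  obtain ⟨h1, h2⟩ := hx
  exact ⟨G.toSubring.mul_mem ha h1, p.mul_mem_left ⟨a, ha⟩ h2⟩

lemma mem0_of_mem {p : Ideal G.toSubring} {x : G.toSubring} (hx : x ∈ p) :
    G.mem0 p (x : R) := ⟨x.2, by simpa using hx⟩

lemma mem_of_mem0 {p : Ideal G.toSubring} {x : G.toSubring} (hx : G.mem0 p (x : R)) :
    x ∈ p := by obtain ⟨h1, h2⟩ := hx; simpa using h2

/-- The graded ideal of `R` canonically associated to an ideal `p` of `R₀`:
`p ⊕ (p : R₁)` where the odd part is `{b ∈ R₁ : b·R₁ ⊆ p}`. -/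
def liftIdeal (p : Ideal G.toSubring) : Ideal R where
  carrier := {x : R | ∃ a b : R, G.mem0 p a ∧
    (b ∈ G.R1 ∧ ∀ t ∈ G.R1, G.mem0 p (b * t)) ∧ x = a + b}
  zero_mem' := ⟨0, 0, G.mem0_zero p, ⟨G.R1.zero_mem, fun t _ => by
    simpa using G.mem0_zero p⟩, by ring⟩
  add_mem' := by
    rintro x y ⟨a, b, ha, ⟨hb1, hb2⟩, rfl⟩ ⟨a', b', ha', ⟨hb1', hb2'⟩, rfl⟩
    refine ⟨a + a', b + b', G.mem0_add ha ha', ⟨G.R1.add_mem hb1 hb1', fun t ht => ?_⟩, by ring⟩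
    rw [add_mul]; exact G.mem0_add (hb2 t ht) (hb2' t ht)
  smul_mem' := by
    rintro r x ⟨a, b, ha, ⟨hb1, hb2⟩, rfl⟩
    obtain ⟨r0, hr0, r1, hr1, rfl⟩ := G.exists_decomp r
    refine ⟨r0 * a + r1 * b, r0 * b + r1 * a, ?_, ⟨?_, ?_⟩, by simp; ring⟩
    · refine G.mem0_add (G.mem0_mul r0 hr0 ha) ?_
      exact (G.mem0_congr (mul_comm r1 b)).mpr (hb2 r1 hr1)
    · exact G.R1.add_mem (G.mul_mem_01 hr0 hb1)
        (by rw [mul_comm]; exact G.mul_mem_01 (G.mem0_R0 ha) hr1)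
    · intro t ht
      rw [add_mul]
      refine G.mem0_add ?_ ?_
      · rw [mul_assoc]
        exact G.mem0_mul r0 hr0 (hb2 t ht)
      · have h1 : r1 * a * t = (r1 * t) * a := by ring
        rw [h1]
        exact G.mem0_mul _ (G.mul_mem_11 hr1 ht) ha

lemma mem0_mem_lift {p : Ideal G.toSubring} {a : R} (ha : G.mem0 p a) :
    a ∈ G.liftIdeal p :=
  ⟨a, 0, ha, ⟨G.R1.zero_mem, fun t _ => by simpa using G.mem0_zero p⟩, by ring⟩

lemma odd_mem_lift {p : Ideal G.toSubring} {b : R} (hb1 : b ∈ G.R1)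
    (hb2 : ∀ t ∈ G.R1, G.mem0 p (b * t)) : b ∈ G.liftIdeal p :=
  ⟨0, b, G.mem0_zero p, ⟨hb1, hb2⟩, by ring⟩

lemma mem0_of_mem_lift {p : Ideal G.toSubring} {x : R} (hx : x ∈ G.liftIdeal p)
    (hx0 : x ∈ G.R0) : G.mem0 p x := by
  obtain ⟨a, b, ha, ⟨hb1, hb2⟩, rfl⟩ := hx
  obtain ⟨h1, h2⟩ := G.decomp_unique hx0 G.R1.zero_mem (G.mem0_R0 ha) hb1 (by ring)
  rw [h1]; exact ha

lemma odd_of_mem_lift {p : Ideal G.toSubring} {x : R} (hx : x ∈ G.liftIdeal p)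
    (hx1 : x ∈ G.R1) : ∀ t ∈ G.R1, G.mem0 p (x * t) := by
  obtain ⟨a, b, ha, ⟨hb1, hb2⟩, rfl⟩ := hx
  obtain ⟨h1, h2⟩ := G.decomp_unique G.R0.zero_mem hx1 (G.mem0_R0 ha) hb1 (by ring)
  intro t ht
  rw [h2]
  exact hb2 t ht

lemma isGradedPrime_lift (p : Ideal G.toSubring) [hp : p.IsPrime] :
    G.IsGradedPrime (G.liftIdeal p) := by
  classical
  refine ⟨?_, ?_, ?_⟩
  · rintro x ⟨a, b, ha, ⟨hb1, hb2⟩, rfl⟩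
    exact ⟨a, b, G.mem0_R0 ha, hb1, G.mem0_mem_lift ha, G.odd_mem_lift hb1 hb2, rfl⟩
  · intro h
    have h1 : (1 : R) ∈ G.liftIdeal p := h ▸ Submodule.mem_top
    have := G.mem0_of_mem_lift h1 G.one_mem
    obtain ⟨h2, h3⟩ := this
    exact hp.ne_top (p.eq_top_iff_one.mpr (by exact h3))
  · rintro r hr s hs hrs
    have prime0 : ∀ a b : R, a ∈ G.R0 → b ∈ G.R0 → G.mem0 p (a * b) →
        G.mem0 p a ∨ G.mem0 p b := by
      intro a b ha hb hab
      have : (⟨a, ha⟩ : G.toSubring) * ⟨b, hb⟩ ∈ p := G.mem_of_mem0 hab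
      rcases hp.mem_or_mem this with h | h
      · exact Or.inl (G.mem0_of_mem h)
      · exact Or.inr (G.mem0_of_mem h)
    rcases hr with hr0 | hr1 <;> rcases hs with hs0 | hs1
    · -- both even
      have := G.mem0_of_mem_lift hrs (G.mul_mem_00 hr0 hs0)
      rcases prime0 r s hr0 hs0 this with h | h
      · exact Or.inl (G.mem0_mem_lift h)
      · exact Or.inr (G.mem0_mem_lift h)
    · -- r even, s odd
      by_cases hN : ∀ t ∈ G.R1, G.mem0 p (s * t)
      · exact Or.inr (G.odd_mem_lift hs1 hN)
      · push_neg at hN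
        obtain ⟨t, ht, hst⟩ := hN
        have hrst := G.odd_of_mem_lift hrs (G.mul_mem_01 hr0 hs1) t ht
        have : G.mem0 p (r * (s * t)) := (G.mem0_congr (by ring)).mp hrst
        rcases prime0 r (s * t) hr0 (G.mul_mem_11 hs1 ht) this with h | h
        · exact Or.inl (G.mem0_mem_lift h)
        · exact absurd h hst
    · -- r odd, s even
      by_cases hN : ∀ t ∈ G.R1, G.mem0 p (r * t)
      · exact Or.inl (G.odd_mem_lift hr1 hN)
      · push_neg at hN
        obtain ⟨t, ht, hrt⟩ := hN
        have hrst := G.odd_of_mem_lift hrs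
          (by rw [mul_comm]; exact G.mul_mem_01 hs0 hr1) t ht
        have : G.mem0 p (s * (r * t)) := (G.mem0_congr (by ring)).mp hrst
        rcases prime0 s (r * t) hs0 (G.mul_mem_11 hr1 ht) this with h | h
        · exact Or.inr (G.mem0_mem_lift h)
        · exact absurd h hrt
    · -- both odd
      by_cases hNr : ∀ t ∈ G.R1, G.mem0 p (r * t)
      · exact Or.inl (G.odd_mem_lift hr1 hNr)
      by_cases hNs : ∀ t ∈ G.R1, G.mem0 p (s * t)
      · exact Or.inr (G.odd_mem_lift hs1 hNs)
      push_neg at hNr hNs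
      obtain ⟨t, ht, hrt⟩ := hNr
      obtain ⟨u, hu, hsu⟩ := hNs
      exfalso
      have hrs0 := G.mem0_of_mem_lift hrs (G.mul_mem_11 hr1 hs1)
      have h1 : G.mem0 p ((r * t) * (s * u)) := by
        have : G.mem0 p ((t * u) * (r * s)) :=
          G.mem0_mul _ (G.mul_mem_11 ht hu) hrs0
        exact (G.mem0_congr (by ring)).mp this
      rcases prime0 (r * t) (s * u) (G.mul_mem_11 hr1 ht) (G.mul_mem_11 hs1 hu) h1 with h | h
      · exact hrt h
      · exact hsu h

lemma isGradedIdeal_span {S : Set R} (hS : S ⊆ G.homogeneous) :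
    G.IsGradedIdeal (Ideal.span S) := by
  intro x hx
  induction hx using Submodule.span_induction with
  | mem y hy =>
      rcases hS hy with h0 | h1
      · exact ⟨y, 0, h0, G.R1.zero_mem, Ideal.subset_span hy, (Ideal.span S).zero_mem, by ring⟩
      · exact ⟨0, y, G.R0.zero_mem, h1, (Ideal.span S).zero_mem, Ideal.subset_span hy, by ring⟩
  | zero => exact ⟨0, 0, G.R0.zero_mem, G.R1.zero_mem, (Ideal.span S).zero_mem,
      (Ideal.span S).zero_mem, by ring⟩
  | add x y hx hy ihx ihy =>
      obtain ⟨a, b, ha0, hb1, haJ, hbJ, rfl⟩ := ihx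
      obtain ⟨a', b', ha0', hb1', haJ', hbJ', rfl⟩ := ihy
      exact ⟨a + a', b + b', G.R0.add_mem ha0 ha0', G.R1.add_mem hb1 hb1',
        Ideal.add_mem _ haJ haJ', Ideal.add_mem _ hbJ hbJ', by ring⟩
  | smul r x hx ih =>
      obtain ⟨a, b, ha0, hb1, haJ, hbJ, rfl⟩ := ih
      obtain ⟨r0, hr0, r1, hr1, rfl⟩ := G.exists_decomp r
      refine ⟨r0 * a + r1 * b, r0 * b + r1 * a, ?_, ?_, ?_, ?_, ?_⟩
      · exact G.R0.add_mem (G.mul_mem_00 hr0 ha0)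
          (by rw [mul_comm]; exact G.mul_mem_11 hb1 hr1)
      · exact G.R1.add_mem (G.mul_mem_01 hr0 hb1)
          (by rw [mul_comm]; exact G.mul_mem_01 ha0 hr1)
      · exact Ideal.add_mem _ (Ideal.mul_mem_left _ _ haJ) (Ideal.mul_mem_left _ _ hbJ)
      · exact Ideal.add_mem _ (Ideal.mul_mem_left _ _ hbJ) (Ideal.mul_mem_left _ _ haJ)
      · simp; ring

end Z2Grading

namespace Z2Grading

variable {R : Type*} [CommRing R] (G : Z2Grading R)

lemma mem_homogeneous_of_R0 {x : R} (h : x ∈ G.R0) : x ∈ G.homogeneous :=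
  Set.mem_union_left _ h

lemma mem_homogeneous_of_R1 {x : R} (h : x ∈ G.R1) : x ∈ G.homogeneous :=
  Set.mem_union_right _ h

lemma comap_isPrime (P : Ideal R) (hP : G.IsGradedPrime P) :
    (Ideal.comap G.toSubring.subtype P).IsPrime := by
  constructor
  · intro h
    rw [Ideal.eq_top_iff_one, Ideal.mem_comap] at h
    exact hP.2.1 (P.eq_top_iff_one.mpr (by simpa using h))
  · intro a b hab
    rw [Ideal.mem_comap] at hab ⊢
    rw [Ideal.mem_comap]
    have : (a : R) * (b : R) ∈ P := by simpa using hab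
    exact hP.2.2 _ (G.mem_homogeneous_of_R0 a.2) _ (G.mem_homogeneous_of_R0 b.2) this

lemma comap_lift (p : Ideal G.toSubring) :
    Ideal.comap G.toSubring.subtype (G.liftIdeal p) = p := by
  ext x
  rw [Ideal.mem_comap]
  constructor
  · intro h
    exact G.mem_of_mem0 (G.mem0_of_mem_lift h x.2)
  · intro h
    exact G.mem0_mem_lift (G.mem0_of_mem h)

lemma lift_comap (P : Ideal R) (hP : G.IsGradedPrime P) :
    G.liftIdeal (Ideal.comap G.toSubring.subtype P) = P := by
  ext x
  constructor
  · rintro ⟨a, b, ha, ⟨hb1, hb2⟩, rfl⟩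
    have haP : a ∈ P := by
      obtain ⟨h1, h2⟩ := ha
      rw [Ideal.mem_comap] at h2
      simpa using h2
    have hbP : b ∈ P := by
      obtain ⟨h1, h2⟩ := hb2 b hb1
      rw [Ideal.mem_comap] at h2
      have hb2P : b * b ∈ P := by simpa using h2
      rcases hP.2.2 _ (G.mem_homogeneous_of_R1 hb1) _ (G.mem_homogeneous_of_R1 hb1) hb2P with
        h | h <;> exact h
    exact P.add_mem haP hbP
  · intro hx
    obtain ⟨a, b, ha0, hb1, haP, hbP, rfl⟩ := hP.1 _ hx
    refine ⟨a, b, ⟨ha0, ?_⟩, ⟨hb1, fun t ht => ⟨G.mul_mem_11 hb1 ht, ?_⟩⟩, rfl⟩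
    · rw [Ideal.mem_comap]; simpa using haP
    · rw [Ideal.mem_comap]
      simpa using P.mul_mem_right t hbP

/-- The forward map `P ↦ P ∩ R₀`. -/
def fwd : {Q : Ideal R // G.IsGradedPrime Q} → PrimeSpectrum G.toSubring :=
  fun P => ⟨Ideal.comap G.toSubring.subtype P.1, G.comap_isPrime P.1 P.2⟩

/-- The inverse map `p ↦ p ⊕ (p : R₁)`. -/
def bwd : PrimeSpectrum G.toSubring → {Q : Ideal R // G.IsGradedPrime Q} :=
  fun p => ⟨G.liftIdeal p.asIdeal, haveI := p.isPrime; G.isGradedPrime_lift p.asIdeal⟩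

lemma isOpen_basic (I : Ideal R) (hI : G.IsGradedIdeal I) :
    @IsOpen _ G.gradedZariski {P : {Q : Ideal R // G.IsGradedPrime Q} | ¬ I ≤ P.1} :=
  TopologicalSpace.isOpen_generateFrom_of_mem ⟨I, hI, rfl⟩

lemma continuous_fwd : @Continuous _ _ G.gradedZariski _ G.fwd := by
  letI := G.gradedZariski
  rw [continuous_def]
  intro U hU
  rw [PrimeSpectrum.isOpen_iff] at hU
  obtain ⟨s, hs⟩ := hU
  have key : G.fwd ⁻¹' U = {P | ¬ Ideal.span ((↑) '' s : Set R) ≤ P.1} := by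
    ext P
    simp only [Set.mem_preimage, Set.mem_setOf_eq]
    rw [← Set.notMem_compl_iff, hs, PrimeSpectrum.mem_zeroLocus]
    apply not_congr
    rw [Ideal.span_le]
    constructor
    · rintro h x ⟨y, hy, rfl⟩
      exact h hy
    · intro h y hy
      exact h ⟨y, hy, rfl⟩
  rw [key]
  exact G.isOpen_basic _ (G.isGradedIdeal_span (by
    rintro x ⟨y, hy, rfl⟩
    exact G.mem_homogeneous_of_R0 y.2))

lemma continuous_bwd : @Continuous _ _ _ G.gradedZariski G.bwd := by
  apply continuous_generateFrom_iff.mpr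
  rintro U ⟨I, hI, rfl⟩
  set T : Set G.toSubring :=
    {x : G.toSubring | (x : R) ∈ I} ∪
    {x : G.toSubring | ∃ b ∈ G.R1, b ∈ I ∧ ∃ t ∈ G.R1, (x : R) = b * t} with hT
  have key : ∀ p : PrimeSpectrum G.toSubring,
      I ≤ G.liftIdeal p.asIdeal ↔ T ⊆ ↑p.asIdeal := by
    intro p
    constructor
    · intro h x hx
      rcases hx with hx | ⟨b, hb1, hbI, t, ht, hbt⟩
      · exact G.mem_of_mem0 (G.mem0_of_mem_lift (h hx) x.2)
      · have := G.odd_of_mem_lift (h hbI) hb1 t ht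
        exact G.mem_of_mem0 ((G.mem0_congr hbt).mpr this)
    · intro h x hx
      obtain ⟨a, b, ha0, hb1, haI, hbI, rfl⟩ := hI x hx
      refine (G.liftIdeal p.asIdeal).add_mem (G.mem0_mem_lift ?_) (G.odd_mem_lift hb1 ?_)
      · exact ⟨ha0, h (Or.inl haI)⟩
      · intro t ht
        exact ⟨G.mul_mem_11 hb1 ht, h (Or.inr ⟨b, hb1, hbI, t, ht, rfl⟩)⟩
  have keq : G.bwd ⁻¹' {P | ¬ I ≤ P.1} = (PrimeSpectrum.zeroLocus T)ᶜ := by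
    ext p
    rw [Set.mem_preimage, Set.mem_setOf_eq, Set.mem_compl_iff, PrimeSpectrum.mem_zeroLocus]
    exact not_congr (key p)
  rw [keq]
  exact (PrimeSpectrum.isClosed_zeroLocus T).isOpen_compl

end Z2Grading

/-- the map `P ↦ P ∩ R₀` is a homeomorphism from the homogeneous spectrum
`Z₂Spec R` (with its Zariski topology) onto `Spec R₀` (with its Zariski topology). -/
theorem homeomorph_gradedSpec_spec {R : Type*} [CommRing R] (G : Z2Grading R) :
    ∃ f : @Homeomorph {Q : Ideal R // G.IsGradedPrime Q} (PrimeSpectrum G.toSubring)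
        G.gradedZariski inferInstance,
      ∀ P : {Q : Ideal R // G.IsGradedPrime Q},
        (f P).asIdeal = Ideal.comap G.toSubring.subtype P.1 := by
  letI := G.gradedZariski
  refine ⟨⟨⟨G.fwd, G.bwd, ?_, ?_⟩, G.continuous_fwd, G.continuous_bwd⟩, fun P => rfl⟩
  · intro P
    exact Subtype.ext (G.lift_comap P.1 P.2)
  · intro p
    exact PrimeSpectrum.ext (G.comap_lift p.asIdeal)
end

section
/- Let R = R₀ ⊕ R₁ be a Z₂-graded commutative ring. Then the homogeneous dimension of R equals the Krull dimension of R₀: hdim R = dim R₀. -/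
section Aux

namespace Z2Grading

variable {R : Type*} [CommRing R] (G : Z2Grading R)

lemma decomp (r : R) : ∃ a ∈ G.R0, ∃ b ∈ G.R1, r = a + b := by
  have h : r ∈ G.R0 ⊔ G.R1 := by rw [G.sup_eq_top]; trivial
  rcases AddSubgroup.mem_sup.mp h with ⟨a, ha, b, hb, hab⟩
  exact ⟨a, ha, b, hb, hab.symm⟩

lemma mem_toSubring {x : R} : x ∈ G.toSubring ↔ x ∈ G.R0 := Iff.rfl

/-- Image of an ideal of `R₀` in `R`. -/
def lift0 (p : Ideal G.toSubring) : Set R :=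
  {x : R | ∃ h : x ∈ G.toSubring, (⟨x, h⟩ : G.toSubring) ∈ p}

variable {G}

lemma lift0_sub0 {p : Ideal G.toSubring} : lift0 G p ⊆ ↑G.R0 := fun _ hx => hx.1

lemma lift0_zero {p : Ideal G.toSubring} : (0 : R) ∈ lift0 G p :=
  ⟨G.toSubring.zero_mem, p.zero_mem⟩

lemma lift0_absorb {p : Ideal G.toSubring} {a x : R} (ha : a ∈ G.R0)
    (hx : x ∈ lift0 G p) : a * x ∈ lift0 G p := by
  obtain ⟨h, hmem⟩ := hx
  refine ⟨G.toSubring.mul_mem ha h, ?_⟩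
  have : (⟨a * x, G.toSubring.mul_mem ha h⟩ : G.toSubring) = ⟨a, ha⟩ * ⟨x, h⟩ := rfl
  rw [this]
  exact Ideal.mul_mem_left p _ hmem

lemma lift0_one_not {p : Ideal G.toSubring} (hp : p ≠ ⊤) : (1 : R) ∉ lift0 G p := by
  rintro ⟨h, hmem⟩
  apply hp
  rw [Ideal.eq_top_iff_one]
  exact hmem

lemma lift0_prime {p : Ideal G.toSubring} [hp : p.IsPrime] {a b : R}
    (ha : a ∈ G.R0) (hb : b ∈ G.R0) (hab : a * b ∈ lift0 G p) :
    a ∈ lift0 G p ∨ b ∈ lift0 G p := by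
  obtain ⟨h, hmem⟩ := hab
  have : (⟨a * b, h⟩ : G.toSubring) = ⟨a, ha⟩ * ⟨b, hb⟩ := rfl
  rw [this] at hmem
  rcases hp.mem_or_mem hmem with h1 | h1
  · exact Or.inl ⟨ha, h1⟩
  · exact Or.inr ⟨hb, h1⟩

variable (G)

/-- The residual submodule of `R₁` attached to `p`. -/
def nset (p : Ideal G.toSubring) : Set R :=
  {m : R | m ∈ G.R1 ∧ ∀ t ∈ G.R1, m * t ∈ lift0 G p}

variable {G}

lemma nset_zero {p : Ideal G.toSubring} : (0 : R) ∈ nset G p :=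
  ⟨G.R1.zero_mem, fun t _ => by rw [zero_mul]; exact lift0_zero⟩

/-- The extension of `p` to a graded ideal of `R`. -/
def extIdeal (G : Z2Grading R) (p : Ideal G.toSubring) : Ideal R where
  carrier := {x : R | ∃ a ∈ lift0 G p, ∃ b ∈ nset G p, x = a + b}
  zero_mem' := ⟨0, lift0_zero, 0, nset_zero, by ring⟩
  add_mem' := by
    rintro x y ⟨a, ha, b, hb, rfl⟩ ⟨c, hc, d, hd, rfl⟩
    refine ⟨a + c, ?_, b + d, ?_, by ring⟩
    · obtain ⟨h1, m1⟩ := ha; obtain ⟨h2, m2⟩ := hc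
      exact ⟨G.toSubring.add_mem h1 h2, p.add_mem m1 m2⟩
    · exact ⟨G.R1.add_mem hb.1 hd.1, fun t ht => by
        rw [add_mul]
        obtain ⟨h1, m1⟩ := hb.2 t ht; obtain ⟨h2, m2⟩ := hd.2 t ht
        exact ⟨G.toSubring.add_mem h1 h2, p.add_mem m1 m2⟩⟩
  smul_mem' := by
    rintro r x ⟨a, ha, b, hb, rfl⟩
    obtain ⟨r0, hr0, r1, hr1, rfl⟩ := G.decomp r
    refine ⟨r0 * a + r1 * b, ?_, r0 * b + r1 * a, ?_, by simp only [smul_eq_mul]; ring⟩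
    · have h1 : r0 * a ∈ lift0 G p := lift0_absorb hr0 ha
      have h2 : r1 * b ∈ lift0 G p := by rw [mul_comm]; exact hb.2 r1 hr1
      obtain ⟨u1, v1⟩ := h1; obtain ⟨u2, v2⟩ := h2
      exact ⟨G.toSubring.add_mem u1 u2, p.add_mem v1 v2⟩
    · refine ⟨G.R1.add_mem (G.mul_mem_01 hr0 hb.1) (by
        rw [mul_comm]; exact G.mul_mem_01 (lift0_sub0 ha) hr1), fun t ht => ?_⟩
      have e : (r0 * b + r1 * a) * t = r0 * (b * t) + (r1 * t) * a := by ring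
      rw [e]
      have h1 : r0 * (b * t) ∈ lift0 G p := lift0_absorb hr0 (hb.2 t ht)
      have h2 : (r1 * t) * a ∈ lift0 G p := lift0_absorb (G.mul_mem_11 hr1 ht) ha
      obtain ⟨u1, v1⟩ := h1; obtain ⟨u2, v2⟩ := h2
      exact ⟨G.toSubring.add_mem u1 u2, p.add_mem v1 v2⟩

lemma mem_extIdeal {p : Ideal G.toSubring} {x : R} :
    x ∈ extIdeal G p ↔ ∃ a ∈ lift0 G p, ∃ b ∈ nset G p, x = a + b := Iff.rfl

lemma mem_extIdeal0 {p : Ideal G.toSubring} {x : R} (hx : x ∈ G.R0) :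
    x ∈ extIdeal G p ↔ x ∈ lift0 G p := by
  constructor
  · rintro ⟨a, ha, b, hb, rfl⟩
    have : b = 0 := G.eq_zero_of_mem_both
      (by have := G.R0.sub_mem hx (lift0_sub0 ha); simpa using this) hb.1
    simpa [this] using ha
  · intro h
    exact ⟨x, h, 0, nset_zero, by ring⟩

lemma mem_extIdeal1 {p : Ideal G.toSubring} {x : R} (hx : x ∈ G.R1) :
    x ∈ extIdeal G p ↔ x ∈ nset G p := by
  constructor
  · rintro ⟨a, ha, b, hb, rfl⟩
    have : a = 0 := G.eq_zero_of_mem_both (lift0_sub0 ha)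
      (by have := G.R1.sub_mem hx hb.1; simpa using this)
    simpa [this] using hb
  · intro h
    exact ⟨0, lift0_zero, x, h, by ring⟩

lemma extIdeal_gradedPrime {p : Ideal G.toSubring} [hp : p.IsPrime] :
    G.IsGradedPrime (extIdeal G p) := by
  refine ⟨?_, ?_, ?_⟩
  · rintro x ⟨a, ha, b, hb, rfl⟩
    exact ⟨a, b, lift0_sub0 ha, hb.1, ⟨a, ha, 0, nset_zero, by ring⟩,
      ⟨0, lift0_zero, b, hb, by ring⟩, rfl⟩
  · intro h
    rw [Ideal.eq_top_iff_one] at h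
    rw [mem_extIdeal0 G.one_mem] at h
    exact lift0_one_not hp.ne_top h
  · rintro r (hr | hr) s (hs | hs) hrs
    · rw [mem_extIdeal0 (G.mul_mem_00 hr hs)] at hrs
      rcases lift0_prime hr hs hrs with h | h
      · exact Or.inl ((mem_extIdeal0 hr).mpr h)
      · exact Or.inr ((mem_extIdeal0 hs).mpr h)
    · -- r ∈ R0, s ∈ R1
      rw [mem_extIdeal1 (G.mul_mem_01 hr hs)] at hrs
      by_cases h : s ∈ nset G p
      · exact Or.inr ((mem_extIdeal1 hs).mpr h)
      · have : ∃ t ∈ G.R1, s * t ∉ lift0 G p := by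
          by_contra hc
          push_neg at hc
          exact h ⟨hs, hc⟩
        obtain ⟨t, ht, hst⟩ := this
        have : r * (s * t) ∈ lift0 G p := by
          rw [← mul_assoc]; exact hrs.2 t ht
        rcases lift0_prime hr (G.mul_mem_11 hs ht) this with h1 | h1
        · exact Or.inl ((mem_extIdeal0 hr).mpr h1)
        · exact absurd h1 hst
    · -- r ∈ R1, s ∈ R0
      rw [mul_comm] at hrs
      rw [mem_extIdeal1 (G.mul_mem_01 hs hr)] at hrs
      by_cases h : r ∈ nset G p
      · exact Or.inl ((mem_extIdeal1 hr).mpr h)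
      · have : ∃ t ∈ G.R1, r * t ∉ lift0 G p := by
          by_contra hc
          push_neg at hc
          exact h ⟨hr, hc⟩
        obtain ⟨t, ht, hrt⟩ := this
        have : s * (r * t) ∈ lift0 G p := by
          rw [← mul_assoc]; exact hrs.2 t ht
        rcases lift0_prime hs (G.mul_mem_11 hr ht) this with h1 | h1
        · exact Or.inr ((mem_extIdeal0 hs).mpr h1)
        · exact absurd h1 hrt
    · -- r, s ∈ R1
      rw [mem_extIdeal0 (G.mul_mem_11 hr hs)] at hrs
      by_cases h : r ∈ nset G p
      · exact Or.inl ((mem_extIdeal1 hr).mpr h)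
      · have : ∃ t ∈ G.R1, r * t ∉ lift0 G p := by
          by_contra hc
          push_neg at hc
          exact h ⟨hr, hc⟩
        obtain ⟨t, ht, hrt⟩ := this
        refine Or.inr ((mem_extIdeal1 hs).mpr ⟨hs, fun u hu => ?_⟩)
        have key : (s * u) * (r * t) ∈ lift0 G p := by
          have e : (s * u) * (r * t) = (u * t) * (r * s) := by ring
          rw [e]
          exact lift0_absorb (G.mul_mem_11 hu ht) hrs
        rcases lift0_prime (G.mul_mem_11 hs hu) (G.mul_mem_11 hr ht) key with h1 | h1
        · exact h1
        · exact absurd h1 hrt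

/-- The contraction of a graded prime to a prime of `R₀`. -/
lemma comap_isPrime_s10 {Q : Ideal R} (hQ : G.IsGradedPrime Q) :
    (Q.comap (G.toSubring.subtype)).IsPrime := by
  constructor
  · intro h
    rw [Ideal.eq_top_iff_one] at h
    have h1 : (1 : R) ∈ Q := h
    exact hQ.2.1 (Ideal.eq_top_iff_one Q |>.mpr h1)
  · intro a b hab
    have h : (a : R) * (b : R) ∈ Q := hab
    rcases hQ.2.2 a (Or.inl a.2) b (Or.inl b.2) h with h1 | h1
    · exact Or.inl h1
    · exact Or.inr h1

lemma le_of_comap_le {Q Q' : Ideal R} (hQ : G.IsGradedPrime Q) (hQ' : G.IsGradedPrime Q')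
    (h : Q.comap (G.toSubring.subtype) ≤ Q'.comap (G.toSubring.subtype)) : Q ≤ Q' := by
  have h0 : ∀ x : R, x ∈ G.R0 → x ∈ Q → x ∈ Q' := by
    intro x hx hxQ
    exact h (show (⟨x, hx⟩ : G.toSubring) ∈ Q.comap G.toSubring.subtype from hxQ)
  have h1 : ∀ x : R, x ∈ G.R1 → x ∈ Q → x ∈ Q' := by
    intro x hx hxQ
    by_contra hxQ'
    have hR1 : (G.R1 : Set R) ⊆ ↑Q' := by
      intro t ht
      have : x * t ∈ Q := Ideal.mul_mem_right _ _ hxQ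
      have hxt : x * t ∈ Q' := h0 _ (G.mul_mem_11 hx ht) this
      rcases hQ'.2.2 x (Or.inr hx) t (Or.inr ht) hxt with h2 | h2
      · exact absurd h2 hxQ'
      · exact h2
    exact hxQ' (hR1 hx)
  intro x hx
  obtain ⟨a, b, ha0, hb1, haQ, hbQ, rfl⟩ := hQ.1 x hx
  exact Q'.add_mem (h0 a ha0 haQ) (h1 b hb1 hbQ)

lemma comap_extIdeal {p : Ideal G.toSubring} :
    (extIdeal G p).comap (G.toSubring.subtype) = p := by
  ext x
  rw [Ideal.mem_comap]
  have hx0 : (x : R) ∈ G.R0 := x.2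
  rw [show (G.toSubring.subtype x : R) = (x : R) from rfl, mem_extIdeal0 hx0]
  constructor
  · rintro ⟨h, hmem⟩
    convert hmem
  · intro h
    exact ⟨x.2, by convert h⟩

end Z2Grading

end Aux

namespace Z2Grading

variable {R : Type*} [CommRing R] {G : Z2Grading R}

lemma lift0_mono {p q : Ideal G.toSubring} (h : p ≤ q) : lift0 G p ⊆ lift0 G q := by
  rintro x ⟨hx, hm⟩
  exact ⟨hx, h hm⟩

lemma extIdeal_mono {p q : Ideal G.toSubring} (h : p ≤ q) : extIdeal G p ≤ extIdeal G q := by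
  rintro x ⟨a, ha, b, hb, rfl⟩
  exact ⟨a, lift0_mono h ha, b, ⟨hb.1, fun t ht => lift0_mono h (hb.2 t ht)⟩, rfl⟩

end Z2Grading

/-- the homogeneous dimension of `R` (the supremum of lengths of chains of
`ℤ₂`-graded prime ideals) equals the Krull dimension of `R₀`. -/
theorem hdim_eq_dim {R : Type*} [CommRing R] (G : Z2Grading R) :
    Order.krullDim {Q : Ideal R // G.IsGradedPrime Q} = ringKrullDim G.toSubring := by
  classical
  let f : {Q : Ideal R // G.IsGradedPrime Q} → PrimeSpectrum G.toSubring :=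
    fun Q => ⟨Q.1.comap G.toSubring.subtype, G.comap_isPrime_s10 Q.2⟩
  let g : PrimeSpectrum G.toSubring → {Q : Ideal R // G.IsGradedPrime Q} :=
    fun p => ⟨Z2Grading.extIdeal G p.asIdeal,
      @Z2Grading.extIdeal_gradedPrime _ _ G p.asIdeal p.isPrime⟩
  have hfg : ∀ p, f (g p) = p := by
    intro p
    apply PrimeSpectrum.ext
    exact Z2Grading.comap_extIdeal
  have hfmono : Monotone f := by
    intro Q Q' h
    exact Ideal.comap_mono h
  have hfinj : Function.Injective f := by
    intro Q Q' h
    have h1 : (f Q).asIdeal ≤ (f Q').asIdeal := le_of_eq (congrArg PrimeSpectrum.asIdeal h)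
    have h2 : (f Q').asIdeal ≤ (f Q).asIdeal := le_of_eq (congrArg PrimeSpectrum.asIdeal h.symm)
    exact Subtype.ext (le_antisymm (G.le_of_comap_le Q.2 Q'.2 h1) (G.le_of_comap_le Q'.2 Q.2 h2))
  have hgmono : Monotone g := by
    intro p q h
    exact Z2Grading.extIdeal_mono h
  have hginj : Function.Injective g := by
    intro p q h
    rw [← hfg p, ← hfg q, h]
  have h1 : Order.krullDim {Q : Ideal R // G.IsGradedPrime Q} ≤
      Order.krullDim (PrimeSpectrum G.toSubring) :=
    Order.krullDim_le_of_strictMono f (hfmono.strictMono_of_injective hfinj)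
  have h2 : Order.krullDim (PrimeSpectrum G.toSubring) ≤
      Order.krullDim {Q : Ideal R // G.IsGradedPrime Q} :=
    Order.krullDim_le_of_strictMono g (hgmono.strictMono_of_injective hginj)
  exact le_antisymm h1 h2
end

section
/- Let R = R₀ ⊕ R₁ be a Z₂-graded commutative ring and R' an R₀-submodule of R₁ with R₁³ ⊄ R'. Then R' is a maximal R₀-submodule of R₁ if and only if (R' :_{R₀} R₁) is a maximal ideal of R₀; and in that case R' = (R' :_{R₀} R₁)·R₁. -/
section Aux

variable {R : Type*} [CommRing R]

private lemma closure_mul_mem {S : Set R} {H : AddSubgroup R} {m s : R}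
    (hs : s ∈ AddSubgroup.closure S) (h : ∀ x ∈ S, x * m ∈ H) : s * m ∈ H := by
  induction hs using AddSubgroup.closure_induction with
  | mem x hx => exact h x hx
  | zero => simpa using H.zero_mem
  | add x y hx hy px py => rw [add_mul]; exact H.add_mem px py
  | neg x hx px => rw [neg_mul]; exact H.neg_mem px

private lemma mem_mulSet {S T : Set R} {a b : R} (ha : a ∈ S) (hb : b ∈ T) :
    a * b ∈ mulSet S T :=
  AddSubgroup.subset_closure ⟨a, ha, b, hb, rfl⟩

private lemma mulSet_le {S T : Set R} {H : AddSubgroup R}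
    (h : ∀ a ∈ S, ∀ b ∈ T, a * b ∈ H) : mulSet S T ≤ H := by
  refine (AddSubgroup.closure_le _).2 ?_
  rintro x ⟨a, ha, b, hb, rfl⟩
  exact h a ha b hb

namespace Z2Grading

variable (G : Z2Grading R) (N : AddSubgroup R)

private lemma mem_residual_iff {a : R} :
    a ∈ G.residual N ↔ a ∈ G.R0 ∧ ∀ r ∈ G.R1, a * r ∈ N := Iff.rfl

private lemma sq_le_R0 : G.sq ≤ G.R0 := by
  refine (AddSubgroup.closure_le _).2 ?_
  rintro x ⟨a, ha, b, hb, rfl⟩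
  exact G.mul_mem_11 ha hb

private lemma resmul_le (hN : G.IsSubmodule1 N) :
    mulSet (↑(G.residual N)) (↑G.R1) ≤ N := by
  refine mulSet_le ?_
  rintro a ⟨_, ha⟩ b hb
  exact ha b hb

private lemma residual_isIdeal0 (hN : G.IsSubmodule1 N) : G.IsIdeal0 (G.residual N) := by
  constructor
  · rintro x ⟨hx0, -⟩; exact hx0
  · rintro a ha x ⟨hx0, hx⟩
    refine ⟨G.mul_mem_00 ha hx0, fun r hr => ?_⟩
    rw [mul_assoc]
    exact hN.2 a ha _ (hx r hr)

private lemma mul_mem_residual (hN : G.IsSubmodule1 N) {n r : R} (hn : n ∈ N)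
    (hr : r ∈ G.R1) : n * r ∈ G.residual N := by
  refine ⟨G.mul_mem_11 (hN.1 hn) hr, fun t ht => ?_⟩
  have : n * r * t = (r * t) * n := by ring
  rw [this]
  exact hN.2 _ (G.mul_mem_11 hr ht) n hn

/-- From `R₁³ ⊄ N` extract `s ∈ R₁²`, `w ∈ R₁` with `s·w ∉ N`. -/
private lemma exists_sq_not_res (h3 : ¬ ((G.cube : Set R) ⊆ ↑N)) :
    ∃ s ∈ G.sq, ∃ w ∈ G.R1, s * w ∉ N := by
  by_contra h
  push_neg at h
  apply h3
  intro x hx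
  exact mulSet_le (fun a ha b hb => h a ha b hb) hx

/-- If the residual is maximal and `s ∈ R₀ \ (N : R₁)`, then `1 = c + s·d`. -/
private lemma exists_one_eq (hqmax : G.IsMaximal0 (G.residual N)) {s : R}
    (hs0 : s ∈ G.R0) (hsq : s ∉ G.residual N) :
    ∃ c ∈ G.residual N, ∃ d ∈ G.R0, (1 : R) = c + s * d := by
  set J : AddSubgroup R :=
    { carrier := {y : R | ∃ c ∈ G.residual N, ∃ d ∈ G.R0, y = c + s * d}
      zero_mem' := ⟨0, (G.residual N).zero_mem, 0, G.R0.zero_mem, by ring⟩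
      add_mem' := by
        rintro x y ⟨c, hc, d, hd, rfl⟩ ⟨c', hc', d', hd', rfl⟩
        exact ⟨c + c', (G.residual N).add_mem hc hc', d + d', G.R0.add_mem hd hd', by ring⟩
      neg_mem' := by
        rintro x ⟨c, hc, d, hd, rfl⟩
        exact ⟨-c, (G.residual N).neg_mem hc, -d, G.R0.neg_mem hd, by ring⟩ } with hJ
  have hJid : G.IsIdeal0 J := by
    constructor
    · rintro x ⟨c, hc, d, hd, rfl⟩
      exact G.R0.add_mem hc.1 (G.mul_mem_00 hs0 hd)
    · rintro a ha x ⟨c, hc, d, hd, rfl⟩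
      exact ⟨a * c, (hqmax.1).2 a ha c hc, a * d, G.mul_mem_00 ha hd, by ring⟩
  have hqJ : G.residual N ≤ J := fun c hc => ⟨c, hc, 0, G.R0.zero_mem, by ring⟩
  rcases hqmax.2.2 J hJid hqJ with h | h
  · exfalso
    apply hsq
    have hsJ : s ∈ J := ⟨0, (G.residual N).zero_mem, 1, G.one_mem, by ring⟩
    have : s ∈ (J : Set R) := hsJ
    rw [h] at this
    exact this
  · have h1J : (1 : R) ∈ (J : Set R) := by rw [h]; exact G.one_mem
    exact h1J

/-- Key lemma: if `1 = c + s·d` with `c ∈ (N : R₁)`, `s ∈ R₁²`, and `m·R₁ ⊆ (N : R₁)`,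
then `m ∈ (N : R₁)·R₁`. -/
private lemma key_mem {s c d : R} (hs : s ∈ G.sq) (hc : c ∈ G.residual N)
    (hd : d ∈ G.R0) (h1 : (1 : R) = c + s * d) {m : R} (hm1 : m ∈ G.R1)
    (hmr : ∀ r ∈ G.R1, m * r ∈ G.residual N) :
    m ∈ mulSet (↑(G.residual N)) (↑G.R1) := by
  have hsm : s * m ∈ mulSet (↑(G.residual N)) (↑G.R1) := by
    refine closure_mul_mem hs ?_
    rintro x ⟨a, ha, b, hb, rfl⟩
    have : a * b * m = (m * b) * a := by ring
    rw [this]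
    exact mem_mulSet (hmr b hb) ha
  have hdsm : d * (s * m) ∈ mulSet (↑(G.residual N)) (↑G.R1) := by
    rw [mul_comm]
    refine closure_mul_mem hsm ?_
    rintro x ⟨a, ha, b, hb, rfl⟩
    have : a * b * d = a * (d * b) := by ring
    rw [this]
    exact mem_mulSet ha (G.mul_mem_01 hd hb)
  have hcm : c * m ∈ mulSet (↑(G.residual N)) (↑G.R1) := mem_mulSet hc hm1
  have : m = c * m + d * (s * m) := by
    calc m = (c + s * d) * m := by rw [← h1, one_mul]
    _ = c * m + d * (s * m) := by ring
  rw [this]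
  exact (mulSet _ _).add_mem hcm hdsm

end Z2Grading

end Aux

/-- for an `R₀`-submodule `R'` of `R₁` with `R₁³ ⊄ R'`, `R'` is a maximal
submodule of `R₁` iff `(R' :_{R₀} R₁)` is a maximal ideal of `R₀`; in this case
`R' = (R' :_{R₀} R₁)·R₁`. -/
theorem maximal_submodule_iff {R : Type*} [CommRing R] (G : Z2Grading R)
    (N : AddSubgroup R) (hN : G.IsSubmodule1 N) (h3 : ¬ ((G.cube : Set R) ⊆ ↑N)) :
    (G.IsMaximalSubmodule1 N ↔ G.IsMaximal0 (G.residual N)) ∧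
    (G.IsMaximalSubmodule1 N → N = mulSet (↑(G.residual N)) (↑G.R1)) := by

  have hqid := G.residual_isIdeal0 N hN
  obtain ⟨s, hs_sq, w, hw, hswN⟩ := G.exists_sq_not_res N h3
  have hs0 : s ∈ G.R0 := G.sq_le_R0 hs_sq
  have hsq : s ∉ G.residual N := fun h => hswN (h.2 w hw)
  have fwd : G.IsMaximalSubmodule1 N → G.IsMaximal0 (G.residual N) := by
    rintro ⟨hNsub, hNne, hmaxi⟩
    refine ⟨hqid, ?_, ?_⟩
    · intro hq
      apply hNne
      refine Set.Subset.antisymm hN.1 ?_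
      intro r hr
      have h1 : (1 : R) ∈ G.residual N := by rw [← SetLike.mem_coe, hq]; exact G.one_mem
      simpa using h1.2 r hr
    · intro I hI hqI
      by_cases hIq : (I : Set R) = ↑(G.residual N)
      · exact Or.inl hIq
      right
      have : ∃ a, a ∈ I ∧ a ∉ G.residual N := by
        by_contra hcon
        push_neg at hcon
        exact hIq (Set.Subset.antisymm (fun x hx => hcon x hx) hqI)
      obtain ⟨a, haI, haq⟩ := this
      have ha0 : a ∈ G.R0 := hI.1 haI
      have : ∃ r ∈ G.R1, a * r ∉ N := by
        by_contra hcon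
        push_neg at hcon
        exact haq ⟨ha0, hcon⟩
      obtain ⟨r, hr, harN⟩ := this
      set m := a * r with hm
      have hm1 : m ∈ G.R1 := G.mul_mem_01 ha0 hr
      set N' : AddSubgroup R :=
        { carrier := {y : R | ∃ n ∈ N, ∃ x ∈ G.R0, y = n + x * m}
          zero_mem' := ⟨0, N.zero_mem, 0, G.R0.zero_mem, by ring⟩
          add_mem' := by
            rintro x y ⟨n, hn, c, hc, rfl⟩ ⟨n', hn', c', hc', rfl⟩
            exact ⟨n + n', N.add_mem hn hn', c + c', G.R0.add_mem hc hc', by ring⟩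
          neg_mem' := by
            rintro x ⟨n, hn, c, hc, rfl⟩
            exact ⟨-n, N.neg_mem hn, -c, G.R0.neg_mem hc, by ring⟩ } with hN'def
      have hN'sub : G.IsSubmodule1 N' := by
        constructor
        · rintro y ⟨n, hn, c, hc, rfl⟩
          exact G.R1.add_mem (hN.1 hn) (G.mul_mem_01 hc hm1)
        · rintro b hb y ⟨n, hn, c, hc, rfl⟩
          exact ⟨b * n, hN.2 b hb n hn, b * c, G.mul_mem_00 hb hc, by ring⟩
      have hNleN' : N ≤ N' := fun n hn => ⟨n, hn, 0, G.R0.zero_mem, by ring⟩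
      have hmN' : m ∈ N' := ⟨0, N.zero_mem, 1, G.one_mem, by ring⟩
      have hN'R1 : (N' : Set R) = ↑G.R1 := by
        rcases hmaxi N' hN'sub hNleN' with h | h
        · exfalso
          apply harN
          have hmem : m ∈ (N' : Set R) := hmN'
          rw [h] at hmem
          exact hmem
        · exact h
      set N'' : AddSubgroup R :=
        { carrier := {y : R | ∃ n ∈ N, ∃ x ∈ I, y = n + x * m}
          zero_mem' := ⟨0, N.zero_mem, 0, I.zero_mem, by ring⟩
          add_mem' := by
            rintro x y ⟨n, hn, c, hc, rfl⟩ ⟨n', hn', c', hc', rfl⟩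
            exact ⟨n + n', N.add_mem hn hn', c + c', I.add_mem hc hc', by ring⟩
          neg_mem' := by
            rintro x ⟨n, hn, c, hc, rfl⟩
            exact ⟨-n, N.neg_mem hn, -c, I.neg_mem hc, by ring⟩ } with hN''def
      have hN''sub : G.IsSubmodule1 N'' := by
        constructor
        · rintro y ⟨n, hn, c, hc, rfl⟩
          exact G.R1.add_mem (hN.1 hn) (G.mul_mem_01 (hI.1 hc) hm1)
        · rintro b hb y ⟨n, hn, c, hc, rfl⟩
          exact ⟨b * n, hN.2 b hb n hn, b * c, hI.2 b hb c hc, by ring⟩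
      have hNleN'' : N ≤ N'' := fun n hn => ⟨n, hn, 0, I.zero_mem, by ring⟩
      rcases hmaxi N'' hN''sub hNleN'' with h | h
      · exfalso
        apply haq
        refine ⟨ha0, fun t ht => ?_⟩
        have htN' : t ∈ (N' : Set R) := by rw [hN'R1]; exact ht
        obtain ⟨n, hn, c, hc, htEq⟩ := htN'
        have ham : a * m ∈ N := by
          have hmem : a * m ∈ (N'' : Set R) := ⟨0, N.zero_mem, a, haI, by ring⟩
          rw [h] at hmem
          exact hmem
        have hcalc : a * t = a * n + c * (a * m) := by rw [htEq]; ring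
        rw [hcalc]
        exact N.add_mem (hN.2 a ha0 n hn) (hN.2 c hc _ ham)
      · have hmN'' : m ∈ (N'' : Set R) := by rw [h]; exact hm1
        obtain ⟨n, hn, x, hxI, hmx⟩ := hmN''
        have hx0 : x ∈ G.R0 := hI.1 hxI
        have h1xm : (1 - x) * m ∈ N := by
          have hcalc : (1 - x) * m = n := by linear_combination hmx
          rw [hcalc]
          exact hn
        have h1x : (1 - x) ∈ G.residual N := by
          refine ⟨G.R0.sub_mem G.one_mem hx0, fun t ht => ?_⟩
          have htN' : t ∈ (N' : Set R) := by rw [hN'R1]; exact ht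
          obtain ⟨n', hn', c, hc, htEq⟩ := htN'
          have hcalc : (1 - x) * t = (1 - x) * n' + c * ((1 - x) * m) := by rw [htEq]; ring
          rw [hcalc]
          exact N.add_mem (hN.2 _ (G.R0.sub_mem G.one_mem hx0) n' hn') (hN.2 c hc _ h1xm)
        have h1I : (1 : R) ∈ I := by
          have hx1 : (1 : R) = (1 - x) + x := by ring
          rw [hx1]
          exact I.add_mem (hqI h1x) hxI
        refine Set.Subset.antisymm hI.1 (fun b hb => ?_)
        have hb1 := hI.2 b hb 1 h1I
        rwa [mul_one] at hb1
  have bwd : G.IsMaximal0 (G.residual N) → G.IsMaximalSubmodule1 N := by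
    intro hqmax
    obtain ⟨c, hc, d, hd, h1⟩ := G.exists_one_eq N hqmax hs0 hsq
    refine ⟨hN, ?_, ?_⟩
    · intro hNR1
      apply hqmax.2.1
      refine Set.Subset.antisymm (fun x hx => hx.1) (fun b hb => ?_)
      refine ⟨hb, fun r hr => ?_⟩
      have hmem : b * r ∈ (G.R1 : Set R) := G.mul_mem_01 hb hr
      rw [← hNR1] at hmem
      exact hmem
    · intro N' hN' hNN'
      have hq' : G.IsIdeal0 (G.residual N') := G.residual_isIdeal0 N' hN'
      have hqq' : G.residual N ≤ G.residual N' := by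
        rintro a ⟨ha0, ha⟩
        exact ⟨ha0, fun r hr => hNN' (ha r hr)⟩
      rcases hqmax.2.2 _ hq' hqq' with h | h
      · left
        refine Set.Subset.antisymm (fun m hm => ?_) (fun x hx => hNN' hx)
        have hm1 : m ∈ G.R1 := hN'.1 hm
        have hmr : ∀ r ∈ G.R1, m * r ∈ G.residual N := by
          intro r hr
          have hmem : m * r ∈ (G.residual N' : Set R) := G.mul_mem_residual N' hN' hm hr
          rw [h] at hmem
          exact hmem
        exact G.resmul_le N hN (G.key_mem N hs_sq hc hd h1 hm1 hmr)
      · right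
        refine Set.Subset.antisymm hN'.1 (fun r hr => ?_)
        have h1' : (1 : R) ∈ G.residual N' := by rw [← SetLike.mem_coe, h]; exact G.one_mem
        have hmem := h1'.2 r hr
        rwa [one_mul] at hmem
  have eqq : G.IsMaximal0 (G.residual N) → N = mulSet (↑(G.residual N)) (↑G.R1) := by
    intro hqmax
    obtain ⟨c, hc, d, hd, h1⟩ := G.exists_one_eq N hqmax hs0 hsq
    refine le_antisymm (fun m hm => ?_) (G.resmul_le N hN)
    exact G.key_mem N hs_sq hc hd h1 (hN.1 hm) (fun r hr => G.mul_mem_residual N hN hm hr)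
  exact ⟨⟨fwd, bwd⟩, fun hmax => eqq (fwd hmax)⟩
end
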